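/- If f is a locally integrable, eventually positive function on [0,∞) that is long-tailed (i.e., f(x−t) ∼ f(x) as x→∞ for every fixed t), then f(x) = o(∫₀ˣ f(y) dy) as x → ∞. -/

import Mathlib

open Filter MeasureTheory Asymptotics
open scoped ENNReal

private lemma key_half (f : ℝ → ℝ) (hnn : ∀ x, 0 ≤ f x)
    (hloc : ∀ x : ℝ, IntervalIntegrable f volume 0 x)
    (hpos : ∀ᶠ x in atTop, 0 < f x)
    (hlong : ∀ t : ℝ, Tendsto (fun x => f (x - t) / f x) atTop (nhds 1)) :
    ∀ᶠ x in atTop, f x ≤ 2 * ∫ y in (x-1)..x, f y := by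
  have hInt : ∀ a b : ℝ, IntervalIntegrable f volume a b :=
    fun a b => (hloc a).symm.trans (hloc b)
  by_contra hcon
  rw [Filter.not_eventually] at hcon
  obtain ⟨m, hm⟩ := eventually_atTop.1 hpos
  have hseq : ∀ n : ℕ, ∃ x : ℝ, (n : ℝ) ≤ x ∧ 0 < f x ∧
      2 * (∫ y in (x-1)..x, f y) < f x := by
    intro n
    obtain ⟨x, hx, hx2⟩ := frequently_atTop.1 hcon (max n m)
    exact ⟨x, le_trans (le_max_left _ _) hx, hm x (le_trans (le_max_right _ _) hx),
      lt_of_not_ge hx2⟩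
  choose x hx hfx hxlt using hseq
  have hxtop : Tendsto x atTop atTop :=
    tendsto_atTop_mono hx tendsto_natCast_atTop_atTop
  set μ := volume.restrict (Set.Ioc (0:ℝ) 1) with hμ
  set g : ℕ → ℝ → ℝ≥0∞ := fun n t => ENNReal.ofReal (f (x n - t) / f (x n)) with hg
  have hIntOn : ∀ n, IntegrableOn (fun t => f (x n - t)) (Set.Ioc (0:ℝ) 1) := by
    intro n
    have := (hInt (x n - 1) (x n)).comp_sub_left (x n)
    simp only [sub_sub_cancel, sub_self] at this
    exact this.2
  have hIntDiv : ∀ n, Integrable (fun t => f (x n - t) / f (x n)) μ :=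
    fun n => (hIntOn n).div_const _
  have hmeas : ∀ n, AEMeasurable (g n) μ := fun n =>
    ENNReal.measurable_ofReal.comp_aemeasurable (hIntDiv n).aestronglyMeasurable.aemeasurable
  have fatou := lintegral_liminf_le' (u := atTop) hmeas
  have hLHS : (∫⁻ t, liminf (fun n => g n t) atTop ∂μ) = 1 := by
    have hpt : ∀ t : ℝ, liminf (fun n => g n t) atTop = 1 := by
      intro t
      have h1 : Tendsto (fun n => f (x n - t) / f (x n)) atTop (nhds 1) :=
        (hlong t).comp hxtop
      have h2 : Tendsto (fun n => g n t) atTop (nhds 1) := by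
        have := (ENNReal.continuous_ofReal.tendsto 1).comp h1
        simpa [hg, ENNReal.ofReal_one, Function.comp_def] using this
      exact h2.liminf_eq
    simp only [hpt]
    simp [hμ, lintegral_const, Real.volume_Ioc]
  rw [hLHS] at fatou
  have hRHS : liminf (fun n => ∫⁻ t, g n t ∂μ) atTop ≤ ENNReal.ofReal (1/2) := by
    have hle : ∀ n, (∫⁻ t, g n t ∂μ) ≤ ENNReal.ofReal (1/2) := by
      intro n
      have hnn' : 0 ≤ᵐ[μ] fun t => f (x n - t) / f (x n) := by
        filter_upwards with t using div_nonneg (hnn _) (hfx n).le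
      have e1 : (∫⁻ t, g n t ∂μ) = ENNReal.ofReal (∫ t, f (x n - t) / f (x n) ∂μ) :=
        (ofReal_integral_eq_lintegral_ofReal (hIntDiv n) hnn').symm
      have e2 : (∫ t, f (x n - t) / f (x n) ∂μ)
          = (∫ y in (x n - 1)..(x n), f y) / f (x n) := by
        rw [integral_div, hμ, ← intervalIntegral.integral_of_le (by norm_num : (0:ℝ) ≤ 1),
          intervalIntegral.integral_comp_sub_left f (x n)]
        norm_num
      rw [e1, e2]
      apply ENNReal.ofReal_le_ofReal
      rw [div_le_iff₀ (hfx n)]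
      linarith [hxlt n]
    calc liminf (fun n => ∫⁻ t, g n t ∂μ) atTop
        ≤ liminf (fun _ : ℕ => ENNReal.ofReal (1/2)) atTop :=
          Filter.liminf_le_liminf (Filter.Eventually.of_forall hle)
      _ = ENNReal.ofReal (1/2) := Filter.liminf_const _
  have : (1:ℝ≥0∞) ≤ ENNReal.ofReal (1/2) := le_trans fatou hRHS
  have : ENNReal.ofReal (1/2) < 1 := by
    rw [ENNReal.ofReal_lt_one]
    norm_num
  exact absurd ‹(1:ℝ≥0∞) ≤ ENNReal.ofReal (1/2)› (not_le.2 this)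

theorem longTailed_isLittleO_integral (f : ℝ → ℝ)
    (hnn : ∀ x, 0 ≤ f x)
    (hloc : ∀ x : ℝ, IntervalIntegrable f volume 0 x)
    (hpos : ∀ᶠ x in atTop, 0 < f x)
    (hlong : ∀ t : ℝ, Tendsto (fun x => f (x - t) / f x) atTop (nhds 1)) :
    (fun x => f x) =o[atTop] (fun x => ∫ y in (0:ℝ)..x, f y) := by
  have hInt : ∀ a b : ℝ, IntervalIntegrable f volume a b :=
    fun a b => (hloc a).symm.trans (hloc b)
  have chunk : ∀ n : ℕ, ∀ᶠ x in atTop, (n : ℝ) / 4 * f x ≤ ∫ y in (x - n)..x, f y := by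
    intro n
    induction n with
    | zero =>
      filter_upwards with x
      simp
    | succ n ih =>
      have ht : Tendsto (fun x : ℝ => x - (n:ℝ)) atTop atTop := by
        simpa [sub_eq_add_neg] using tendsto_atTop_add_const_right atTop (-(n:ℝ)) tendsto_id
      have h1 : ∀ᶠ x in atTop, f (x - n) ≤ 2 * ∫ y in (x - n - 1)..(x - n), f y :=
        ht.eventually (key_half f hnn hloc hpos hlong)
      have h2 : ∀ᶠ x in atTop, (1:ℝ)/2 ≤ f (x - n) / f x :=
        (hlong n).eventually (eventually_ge_nhds (by norm_num))
      filter_upwards [h1, h2, ih, hpos] with x h1 h2 ih hp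
      have key : f x / 2 ≤ f (x - n) := by
        have := (le_div_iff₀ hp).1 h2
        linarith
      have split : (∫ y in (x - ((n:ℝ)+1))..x, f y)
          = (∫ y in (x - n - 1)..(x - n), f y) + ∫ y in (x - n)..x, f y := by
        rw [show x - ((n:ℝ)+1) = x - n - 1 by ring]
        exact (intervalIntegral.integral_add_adjacent_intervals (hInt _ _) (hInt _ _)).symm
      push_cast
      rw [split]
      linarith
  rw [Asymptotics.isLittleO_iff]
  intro c hc
  obtain ⟨n, hn⟩ := exists_nat_ge (4 / c)
  have h4 : 4 ≤ (n:ℝ) * c := (div_le_iff₀ hc).1 hn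
  filter_upwards [chunk n, eventually_ge_atTop ((n:ℝ))] with x hchunk hxn
  have hx0 : (0:ℝ) ≤ x - n := by linarith
  have hsplit : (∫ y in (0:ℝ)..x, f y)
      = (∫ y in (0:ℝ)..(x - n), f y) + ∫ y in (x - n)..x, f y :=
    (intervalIntegral.integral_add_adjacent_intervals (hInt _ _) (hInt _ _)).symm
  have hfirst : 0 ≤ ∫ y in (0:ℝ)..(x - n), f y :=
    intervalIntegral.integral_nonneg hx0 (fun y _ => hnn y)
  have hF : (n:ℝ) / 4 * f x ≤ ∫ y in (0:ℝ)..x, f y := by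
    rw [hsplit]; linarith
  have hFnn : 0 ≤ ∫ y in (0:ℝ)..x, f y := by
    have := mul_nonneg (by positivity : (0:ℝ) ≤ (n:ℝ)/4) (hnn x)
    linarith
  rw [Real.norm_of_nonneg (hnn x), Real.norm_of_nonneg hFnn]
  nlinarith [mul_le_mul_of_nonneg_left hF hc.le, mul_nonneg (sub_nonneg.2 h4) (hnn x)]
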